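/- Fix 0 ≤ α < 1/2 and τ ∈ ℝ. Then limsup_{N→∞} P_{N,α}(τ √N) ≤ exp(−(4(1−α)/(2^α π))² τ² / (1−2α)). -/

import Mathlib

/-- Kac normalization `𝒩_α(N) = (2 ∑_{j=1}^{⌊N/2⌋} j^{−α})⁻¹`. -/
noncomputable def kacNorm (α : ℝ) (N : ℕ) : ℝ :=
  (2 * ∑ j ∈ Finset.Icc 1 (N / 2), (j : ℝ) ^ (-α))⁻¹

/-- The relaxation product `P_{N,α}(t) = ∏_{j=1}^{⌊N/2⌋} cos²(2 𝒩_α(N) t j^{−α})`. -/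
noncomputable def relaxProd (α : ℝ) (N : ℕ) (t : ℝ) : ℝ :=
  ∏ j ∈ Finset.Icc 1 (N / 2), Real.cos (2 * kacNorm α N * t * (j : ℝ) ^ (-α)) ^ 2



namespace Stmt7Aux
open Real Filter Finset


lemma antOn (β : ℝ) (hβ0 : 0 ≤ β) (A : Set ℝ) (hA : A ⊆ Set.Ici 1) :
    AntitoneOn (fun x : ℝ => x ^ (-β)) A := by
  intro x hx y hy hxy
  exact Real.rpow_le_rpow_of_nonpos (lt_of_lt_of_le one_pos (hA hx)) hxy (neg_nonpos.2 hβ0)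

lemma integ (β : ℝ) (hβ1 : β < 1) (a : ℕ) :
    ∫ x in (1:ℝ)..(1 + (a:ℝ)), x ^ (-β) = ((1 + (a:ℝ)) ^ (1 - β) - 1) / (1 - β) := by
  rw [integral_rpow (Or.inr ⟨by intro h; apply hβ1.ne; linarith [neg_eq_iff_eq_neg.1 h], by
    rw [Set.uIcc_of_le (by norm_num [Nat.cast_nonneg])]
    rintro ⟨h0, -⟩; linarith⟩)]
  rw [Real.one_rpow]
  ring_nf

lemma sum_eq_range (β : ℝ) (M : ℕ) :
    ∑ j ∈ Icc 1 M, (j:ℝ) ^ (-β) = ∑ i ∈ range M, ((1:ℝ) + (i:ℕ)) ^ (-β) := by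
  rw [← Finset.Ico_add_one_right_eq_Icc, Finset.sum_Ico_eq_sum_range]
  norm_num

lemma sum_lower (β : ℝ) (hβ0 : 0 ≤ β) (hβ1 : β < 1) (M : ℕ) :
    ((1 + (M:ℝ)) ^ (1 - β) - 1) / (1 - β) ≤ ∑ j ∈ Icc 1 M, (j:ℝ) ^ (-β) := by
  rw [sum_eq_range β M, ← integ β hβ1 M]
  exact AntitoneOn.integral_le_sum (antOn β hβ0 _ (by
    intro x hx; exact hx.1))

lemma sum_upper (β : ℝ) (hβ0 : 0 ≤ β) (hβ1 : β < 1) (K : ℕ) :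
    ∑ j ∈ Icc 1 (K + 1), (j:ℝ) ^ (-β) ≤ ((1 + (K:ℝ)) ^ (1 - β) - 1) / (1 - β) + 1 := by
  rw [sum_eq_range β (K+1), Finset.sum_range_succ']
  have h := AntitoneOn.sum_le_integral (x₀ := 1) (a := K) (f := fun x : ℝ => x ^ (-β))
    (antOn β hβ0 _ (by intro x hx; exact hx.1))
  rw [integ β hβ1 K] at h
  have h2 : ((1:ℝ) + (0:ℕ)) ^ (-β) = 1 := by norm_num
  rw [h2]
  gcongr

lemma tendsto_sum_div (β : ℝ) (hβ0 : 0 ≤ β) (hβ1 : β < 1) :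
    Tendsto (fun M : ℕ => (∑ j ∈ Icc 1 M, (j:ℝ) ^ (-β)) / (M:ℝ) ^ ((1:ℝ) - β))
      atTop (nhds (1 / (1 - β))) := by
  have hp : (0:ℝ) < 1 - β := by linarith
  -- r M = (M^p)⁻¹ → 0
  have hr : Tendsto (fun M : ℕ => ((M:ℝ) ^ ((1:ℝ) - β))⁻¹) atTop (nhds 0) := by
    apply Filter.Tendsto.inv_tendsto_atTop
    exact (tendsto_rpow_atTop hp).comp tendsto_natCast_atTop_atTop
  -- (1 + 1/M)^p → 1
  have hq : Tendsto (fun M : ℕ => ((1:ℝ) + 1 / (M:ℝ)) ^ ((1:ℝ) - β)) atTop (nhds 1) := by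
    have h1 : Tendsto (fun M : ℕ => (1:ℝ) + 1 / (M:ℝ)) atTop (nhds 1) := by
      simpa using tendsto_const_nhds.add (tendsto_one_div_atTop_nhds_zero_nat (𝕜 := ℝ))
    simpa using h1.rpow_const (Or.inl one_ne_zero)
  -- lower bound sequence
  have hg : Tendsto (fun M : ℕ => ((1 + (M:ℝ)) ^ ((1:ℝ) - β) - 1) / (1 - β) / (M:ℝ) ^ ((1:ℝ) - β))
      atTop (nhds (1 / (1 - β))) := by
    have base : Tendsto (fun M : ℕ =>
        (((1:ℝ) + 1 / (M:ℝ)) ^ ((1:ℝ) - β) - ((M:ℝ) ^ ((1:ℝ) - β))⁻¹) / (1 - β))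
        atTop (nhds ((1 - 0) / (1 - β))) := ((hq.sub hr)).div_const _
    rw [show (1:ℝ) - 0 = 1 by ring] at base
    apply base.congr'
    filter_upwards [eventually_ge_atTop 1] with M hM
    have hM0 : (0:ℝ) < (M:ℝ) := by exact_mod_cast hM
    have hMp : (0:ℝ) < (M:ℝ) ^ ((1:ℝ) - β) := rpow_pos_of_pos hM0 _
    have key : ((1:ℝ) + 1 / (M:ℝ)) ^ ((1:ℝ) - β) = (1 + (M:ℝ)) ^ ((1:ℝ) - β) / (M:ℝ) ^ ((1:ℝ) - β) := by
      rw [← Real.div_rpow (by positivity) hM0.le]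
      congr 1
      field_simp
      ring
    rw [key, inv_eq_one_div, div_sub_div_same, div_div, div_div, mul_comm]
  -- upper bound sequence
  have hh : Tendsto (fun M : ℕ => (((M:ℝ) ^ ((1:ℝ) - β) - 1) / (1 - β) + 1) / (M:ℝ) ^ ((1:ℝ) - β))
      atTop (nhds (1 / (1 - β))) := by
    have base : Tendsto (fun M : ℕ =>
        ((1 - ((M:ℝ) ^ ((1:ℝ) - β))⁻¹) / (1 - β) + ((M:ℝ) ^ ((1:ℝ) - β))⁻¹))
        atTop (nhds ((1 - 0) / (1 - β) + 0)) := ((tendsto_const_nhds.sub hr).div_const _).add hr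
    rw [show ((1:ℝ) - 0) / (1 - β) + 0 = 1 / (1 - β) by ring] at base
    apply base.congr'
    filter_upwards [eventually_ge_atTop 1] with M hM
    have hM0 : (0:ℝ) < (M:ℝ) := by exact_mod_cast hM
    have hMp : (0:ℝ) < (M:ℝ) ^ ((1:ℝ) - β) := rpow_pos_of_pos hM0 _
    field_simp
  refine tendsto_of_tendsto_of_tendsto_of_le_of_le' hg hh ?_ ?_
  · filter_upwards [eventually_ge_atTop 1] with M hM
    have hM0 : (0:ℝ) < (M:ℝ) := by exact_mod_cast hM
    have hMp : (0:ℝ) < (M:ℝ) ^ ((1:ℝ) - β) := rpow_pos_of_pos hM0 _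
    gcongr
    exact sum_lower β hβ0 hβ1 M
  · filter_upwards [eventually_ge_atTop 1] with M hM
    have hM0 : (0:ℝ) < (M:ℝ) := by exact_mod_cast hM
    have hMp : (0:ℝ) < (M:ℝ) ^ ((1:ℝ) - β) := rpow_pos_of_pos hM0 _
    gcongr
    obtain ⟨K, rfl⟩ : ∃ K, M = K + 1 := ⟨M - 1, by omega⟩
    have := sum_upper β hβ0 hβ1 K
    have hc : ((K:ℝ) + 1) = (1 + (K:ℝ)) := by ring
    push_cast
    rw [hc]
    linarith


lemma cos_sq_le_exp (x : ℝ) : Real.cos x ^ 2 ≤ Real.exp (-(Real.sin x ^ 2)) := by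
  have h := Real.sin_sq_add_cos_sq x
  have h2 := Real.add_one_le_exp (-(Real.sin x ^ 2))
  linarith

lemma sq_sub_le_sin_sq (x : ℝ) : x ^ 2 - 4 * x ^ 4 ≤ Real.sin x ^ 2 := by
  rcases le_or_gt (|x|) (1/2) with h | h
  · have h2 : |2 * x| ≤ 1 := by rw [abs_mul]; simp; linarith [abs_nonneg x]
    have hb := Real.cos_bound h2
    have hsin : Real.sin x ^ 2 = 1 / 2 - Real.cos (2 * x) / 2 := by
      have := Real.cos_sq x
      have := Real.sin_sq_add_cos_sq x
      linarith
    have habs : |2 * x| ^ 4 = 16 * x ^ 4 := by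
      rw [show (4:ℕ) = 2 * 2 by rfl, pow_mul, sq_abs]; ring
    rw [habs] at hb
    have hb2 : Real.cos (2 * x) ≤ 1 - (2 * x) ^ 2 / 2 + 16 * x ^ 4 * (5 / 96) :=
      by have := abs_sub_le_iff.1 hb; linarith [this.1]
    rw [hsin]
    nlinarith [sq_nonneg x, sq_nonneg (x^2)]
  · have h1 : 1 / 4 ≤ x ^ 2 := by nlinarith [sq_abs x, abs_nonneg x]
    nlinarith [sq_nonneg (Real.sin x), sq_nonneg x]

lemma stepB' (α : ℝ) (hα0 : 0 ≤ α) (hα1 : α < 1 / 2) (τ : ℝ) :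
    Tendsto (fun N : ℕ => (1 - 4 * (τ ^ 2 * N / (∑ j ∈ Icc 1 (N / 2), (j:ℝ) ^ (-α)) ^ 2)) *
        ((τ ^ 2 * N / (∑ j ∈ Icc 1 (N / 2), (j:ℝ) ^ (-α)) ^ 2) *
          ∑ j ∈ Icc 1 (N / 2), (j:ℝ) ^ (-(2 * α)))) atTop
      (nhds ((1 - 4 * 0) * (τ ^ 2 * (2 * (1 / (1 - 2 * α)) * ((1 / (1 - α))⁻¹) ^ 2)))) := by
  have hα2 : (0:ℝ) < 1 - 2 * α := by linarith
  have hα3 : (0:ℝ) < 1 - α := by linarith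
  set M : ℕ → ℕ := fun N => N / 2 with hM
  set S1 : ℕ → ℝ := fun N => ∑ j ∈ Icc 1 (M N), (j:ℝ) ^ (-α) with hS1def
  set S2 : ℕ → ℝ := fun N => ∑ j ∈ Icc 1 (M N), (j:ℝ) ^ (-(2 * α)) with hS2def
  have hMtop : Tendsto M atTop atTop :=
    tendsto_atTop_atTop.2 fun b => ⟨2 * b, fun N h => by simp only [hM]; omega⟩
  have hS1 : Tendsto (fun N => S1 N / (M N : ℝ) ^ ((1:ℝ) - α)) atTop (nhds (1 / (1 - α))) :=
    (tendsto_sum_div α hα0 (by linarith)).comp hMtop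
  have hS2 : Tendsto (fun N => S2 N / (M N : ℝ) ^ ((1:ℝ) - 2 * α)) atTop
      (nhds (1 / (1 - 2 * α))) := by
    have := (tendsto_sum_div (2 * α) (by linarith) (by linarith)).comp hMtop
    simpa [Function.comp_def] using this
  -- N / M → 2
  have hMcast : Tendsto (fun N => (M N : ℝ)) atTop atTop :=
    tendsto_natCast_atTop_atTop.comp hMtop
  have hratio : Tendsto (fun N : ℕ => (N:ℝ) / (M N : ℝ)) atTop (nhds 2) := by
    have hup : Tendsto (fun N : ℕ => 2 + 1 / (M N : ℝ)) atTop (nhds 2) := by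
      simpa using tendsto_const_nhds.add ((tendsto_one_div_atTop_nhds_zero_nat (𝕜 := ℝ)).comp hMtop)
    refine tendsto_of_tendsto_of_tendsto_of_le_of_le' tendsto_const_nhds hup ?_ ?_
    · filter_upwards [eventually_ge_atTop 2] with N hN
      have hM1 : 1 ≤ M N := by simp only [hM]; omega
      have hM0 : (0:ℝ) < (M N : ℝ) := by exact_mod_cast hM1
      rw [le_div_iff₀ hM0]
      have : 2 * M N ≤ N := by simp only [hM]; omega
      exact_mod_cast this
    · filter_upwards [eventually_ge_atTop 2] with N hN
      have hM1 : 1 ≤ M N := by simp only [hM]; omega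
      have hM0 : (0:ℝ) < (M N : ℝ) := by exact_mod_cast hM1
      rw [div_le_iff₀ hM0]
      have h2 : N ≤ 2 * M N + 1 := by simp only [hM]; omega
      have h2' : (N:ℝ) ≤ 2 * (M N : ℝ) + 1 := by exact_mod_cast h2
      calc (N:ℝ) ≤ 2 * (M N : ℝ) + 1 := h2'
        _ = (2 + 1 / (M N : ℝ)) * (M N : ℝ) := by field_simp
  -- B N := N * S2 N / S1 N ^ 2 → 2 * (1/(1-2α)) * ((1/(1-α))⁻¹)^2
  have hB : Tendsto (fun N : ℕ => (N:ℝ) * S2 N / (S1 N) ^ 2) atTop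
      (nhds (2 * (1 / (1 - 2 * α)) * ((1 / (1 - α))⁻¹) ^ 2)) := by
    have hT := (hratio.mul hS2).mul ((hS1.inv₀ (one_div_ne_zero (by linarith))).pow 2)
    apply hT.congr'
    filter_upwards [eventually_ge_atTop 2] with N hN
    have hM1 : 1 ≤ M N := by simp only [hM]; omega
    have hM0 : (0:ℝ) < (M N : ℝ) := by exact_mod_cast hM1
    have hp1 : (0:ℝ) < (M N : ℝ) ^ ((1:ℝ) - α) := rpow_pos_of_pos hM0 _
    have hp2 : (0:ℝ) < (M N : ℝ) ^ ((1:ℝ) - 2 * α) := rpow_pos_of_pos hM0 _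
    have hS1pos : 0 < S1 N := by
      apply Finset.sum_pos (fun j hj => ?_) ⟨1, Finset.mem_Icc.2 ⟨le_refl 1, hM1⟩⟩
      have : 1 ≤ j := (Finset.mem_Icc.1 hj).1
      exact Real.rpow_pos_of_pos (by exact_mod_cast this) _
    have hkey : ((M N : ℝ) ^ ((1:ℝ) - α)) ^ 2 = (M N : ℝ) * (M N : ℝ) ^ ((1:ℝ) - 2 * α) := by
      rw [← Real.rpow_natCast ((M N : ℝ) ^ ((1:ℝ) - α)) 2, ← Real.rpow_mul hM0.le]
      rw [show ((1:ℝ) - α) * (2:ℕ) = 1 + (1 - 2 * α) by push_cast; ring]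
      rw [Real.rpow_add hM0, Real.rpow_one]
    show (N:ℝ) / (M N : ℝ) * (S2 N / (M N : ℝ) ^ ((1:ℝ) - 2 * α)) *
        ((S1 N / (M N : ℝ) ^ ((1:ℝ) - α))⁻¹) ^ 2 = (N:ℝ) * S2 N / (S1 N) ^ 2
    calc (N:ℝ) / (M N : ℝ) * (S2 N / (M N : ℝ) ^ ((1:ℝ) - 2 * α)) *
        ((S1 N / (M N : ℝ) ^ ((1:ℝ) - α))⁻¹) ^ 2
        = ((N:ℝ) * S2 N * ((M N : ℝ) ^ ((1:ℝ) - α)) ^ 2) /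
            ((M N : ℝ) * (M N : ℝ) ^ ((1:ℝ) - 2 * α) * (S1 N) ^ 2) := by
          rw [inv_div]; ring
      _ = ((N:ℝ) * S2 N * ((M N : ℝ) * (M N : ℝ) ^ ((1:ℝ) - 2 * α))) /
            ((M N : ℝ) * (M N : ℝ) ^ ((1:ℝ) - 2 * α) * (S1 N) ^ 2) := by rw [hkey]
      _ = (N:ℝ) * S2 N / (S1 N) ^ 2 := by
          rw [div_eq_div_iff (mul_pos (mul_pos hM0 hp2) (pow_pos hS1pos 2)).ne'
            (pow_pos hS1pos 2).ne']
          ring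
  have hS2top : Tendsto S2 atTop atTop := by
    have hid : Tendsto (fun N => (S2 N / (M N : ℝ) ^ ((1:ℝ) - 2 * α)) *
        (M N : ℝ) ^ ((1:ℝ) - 2 * α)) atTop atTop :=
      Tendsto.pos_mul_atTop (one_div_pos.2 hα2) hS2
        ((tendsto_rpow_atTop (by linarith)).comp hMcast)
    apply hid.congr'
    filter_upwards [eventually_ge_atTop 2] with N hN
    have hM1 : 1 ≤ M N := by simp only [hM]; omega
    have hM0 : (0:ℝ) < (M N : ℝ) := by exact_mod_cast hM1
    exact div_mul_cancel₀ _ (rpow_pos_of_pos hM0 _).ne'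
  have hcs0 : Tendsto (fun N : ℕ => τ ^ 2 * N / (S1 N) ^ 2) atTop (nhds 0) := by
    have h := Tendsto.div_atTop (hB.const_mul (τ ^ 2)) hS2top
    apply h.congr'
    filter_upwards [eventually_ge_atTop 2] with N hN
    have hM1 : 1 ≤ M N := by simp only [hM]; omega
    have hS2pos : 0 < S2 N := by
      apply Finset.sum_pos (fun j hj => ?_) ⟨1, Finset.mem_Icc.2 ⟨le_refl 1, hM1⟩⟩
      have : 1 ≤ j := (Finset.mem_Icc.1 hj).1
      exact Real.rpow_pos_of_pos (by exact_mod_cast this) _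
    have he : τ ^ 2 * ((N:ℝ) * S2 N / S1 N ^ 2) / S2 N
        = (τ ^ 2 * (N:ℝ) / S1 N ^ 2) * (S2 N / S2 N) := by ring
    rw [he, div_self hS2pos.ne', mul_one]
  have h2nd : Tendsto (fun N : ℕ => (τ ^ 2 * N / (S1 N) ^ 2) * S2 N) atTop
      (nhds (τ ^ 2 * (2 * (1 / (1 - 2 * α)) * ((1 / (1 - α))⁻¹) ^ 2))) :=
    (hB.const_mul (τ ^ 2)).congr (fun N => by ring)
  exact (tendsto_const_nhds.sub (hcs0.const_mul 4)).mul h2nd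


end Stmt7Aux

namespace Stmt7Aux
open Real Filter Finset

lemma stepA (α : ℝ) (hα0 : 0 ≤ α) (N : ℕ) (τ : ℝ) :
    _root_.relaxProd α N (τ * Real.sqrt N) ≤
      Real.exp (-((1 - 4 * (τ ^ 2 * N / (∑ j ∈ Icc 1 (N / 2), (j:ℝ) ^ (-α)) ^ 2)) *
        ((τ ^ 2 * N / (∑ j ∈ Icc 1 (N / 2), (j:ℝ) ^ (-α)) ^ 2) *
          ∑ j ∈ Icc 1 (N / 2), (j:ℝ) ^ (-(2 * α))))) := by
  set S1 : ℝ := ∑ j ∈ Icc 1 (N / 2), (j:ℝ) ^ (-α) with hS1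
  set c : ℝ := 2 * _root_.kacNorm α N * (τ * Real.sqrt N) with hc
  set cs : ℝ := τ ^ 2 * N / S1 ^ 2 with hcs
  have hc2 : c ^ 2 = cs := by
    rw [hc, hcs, _root_.kacNorm, mul_pow, mul_pow, mul_pow, Real.sq_sqrt (Nat.cast_nonneg N),
      ← hS1, inv_pow, mul_pow, div_eq_mul_inv, mul_inv]
    norm_num
    ring
  have key : ∀ j ∈ Icc 1 (N / 2), Real.cos (c * (j:ℝ) ^ (-α)) ^ 2 ≤
      Real.exp (-((1 - 4 * cs) * (cs * (j:ℝ) ^ (-(2 * α))))) := by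
    intro j hj
    have hj1 : 1 ≤ j := (Finset.mem_Icc.1 hj).1
    have hj0 : (0:ℝ) < (j:ℝ) := by exact_mod_cast hj1
    have hjpow : ((j:ℝ) ^ (-α)) ^ 2 = (j:ℝ) ^ (-(2 * α)) := by
      rw [sq, ← Real.rpow_add hj0]; ring_nf
    have hle1 : (j:ℝ) ^ (-(2 * α)) ≤ 1 :=
      Real.rpow_le_one_of_one_le_of_nonpos (by exact_mod_cast hj1) (by linarith)
    have hge0 : (0:ℝ) ≤ (j:ℝ) ^ (-(2 * α)) := (Real.rpow_pos_of_pos hj0 _).le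
    set x : ℝ := c * (j:ℝ) ^ (-α) with hx
    have hx2 : x ^ 2 = cs * (j:ℝ) ^ (-(2 * α)) := by
      rw [hx, mul_pow, hjpow, hc2]
    have hxle : x ^ 2 ≤ cs := by
      rw [hx2]
      calc cs * (j:ℝ) ^ (-(2 * α)) ≤ cs * 1 := by
            apply mul_le_mul_of_nonneg_left hle1
            rw [← hc2]; exact sq_nonneg c
        _ = cs := mul_one cs
    refine (cos_sq_le_exp x).trans (Real.exp_le_exp.2 ?_)
    rw [neg_le_neg_iff, ← hx2]
    nlinarith [sq_sub_le_sin_sq x, sq_nonneg x, sq_nonneg (x ^ 2)]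
  calc _root_.relaxProd α N (τ * Real.sqrt N)
      ≤ ∏ j ∈ Icc 1 (N / 2), Real.exp (-((1 - 4 * cs) * (cs * (j:ℝ) ^ (-(2 * α))))) := by
        apply Finset.prod_le_prod (fun j _ => sq_nonneg _) key
    _ = Real.exp (∑ j ∈ Icc 1 (N / 2), -((1 - 4 * cs) * (cs * (j:ℝ) ^ (-(2 * α))))) :=
        (Real.exp_sum _ _).symm
    _ = Real.exp (-((1 - 4 * cs) * (cs * ∑ j ∈ Icc 1 (N / 2), (j:ℝ) ^ (-(2 * α))))) := by
        congr 1
        rw [Finset.mul_sum, Finset.mul_sum, ← Finset.sum_neg_distrib]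


end Stmt7Aux

/-- Gaussian upper bound in rescaled time `t = τ √N` for `0 ≤ α < 1/2`. -/
theorem stmt_7 (α : ℝ) (hα0 : 0 ≤ α) (hα1 : α < 1 / 2) (τ : ℝ) :
    Filter.limsup (fun N : ℕ => relaxProd α N (τ * Real.sqrt N)) Filter.atTop ≤
      Real.exp (-(4 * (1 - α) / (2 ^ α * Real.pi)) ^ 2 * τ ^ 2 / (1 - 2 * α)) := by
  classical
  have hα2 : (0:ℝ) < 1 - 2 * α := by linarith
  have hα3 : (0:ℝ) < 1 - α := by linarith
  set L' : ℝ := (1 - 4 * 0) * (τ ^ 2 * (2 * (1 / (1 - 2 * α)) * ((1 / (1 - α))⁻¹) ^ 2)) with hL'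
  have hE := Stmt7Aux.stepB' α hα0 hα1 τ
  have hg : Filter.Tendsto (fun N : ℕ => Real.exp (-((1 - 4 * (τ ^ 2 * N /
      (∑ j ∈ Finset.Icc 1 (N / 2), (j:ℝ) ^ (-α)) ^ 2)) *
      ((τ ^ 2 * N / (∑ j ∈ Finset.Icc 1 (N / 2), (j:ℝ) ^ (-α)) ^ 2) *
        ∑ j ∈ Finset.Icc 1 (N / 2), (j:ℝ) ^ (-(2 * α)))))) Filter.atTop
      (nhds (Real.exp (-L'))) :=
    (Real.continuous_exp.tendsto _).comp hE.neg
  have h1 : Filter.limsup (fun N : ℕ => relaxProd α N (τ * Real.sqrt N)) Filter.atTop ≤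
      Filter.limsup (fun N : ℕ => Real.exp (-((1 - 4 * (τ ^ 2 * N /
      (∑ j ∈ Finset.Icc 1 (N / 2), (j:ℝ) ^ (-α)) ^ 2)) *
      ((τ ^ 2 * N / (∑ j ∈ Finset.Icc 1 (N / 2), (j:ℝ) ^ (-α)) ^ 2) *
        ∑ j ∈ Finset.Icc 1 (N / 2), (j:ℝ) ^ (-(2 * α)))))) Filter.atTop := by
    apply Filter.limsup_le_limsup
    · exact Filter.Eventually.of_forall (fun N => Stmt7Aux.stepA α hα0 N τ)
    · exact Filter.isCoboundedUnder_le_of_eventually_le Filter.atTop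
        (Filter.Eventually.of_forall (fun N =>
          Finset.prod_nonneg fun j _ => sq_nonneg _))
    · exact hg.isBoundedUnder_le
  rw [hg.limsup_eq] at h1
  refine h1.trans (Real.exp_le_exp.2 ?_)
  rw [neg_mul, neg_div, neg_le_neg_iff]
  have h2a : (1:ℝ) ≤ 2 ^ α := by
    rw [show (1:ℝ) = (2:ℝ) ^ (0:ℝ) from (Real.rpow_zero 2).symm]
    exact Real.rpow_le_rpow_of_exponent_le one_le_two hα0
  have hπ := Real.pi_gt_three
  have hb : (3:ℝ) ≤ 2 ^ α * Real.pi := by nlinarith [Real.pi_pos]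
  have key : (4 * (1 - α) / (2 ^ α * Real.pi)) ^ 2 ≤ 2 * (1 - α) ^ 2 := by
    have hpos : (0:ℝ) < (2 ^ α * Real.pi) ^ 2 := by positivity
    rw [div_pow, div_le_iff₀ hpos]
    nlinarith [mul_nonneg (sq_nonneg (1 - α))
      (show (0:ℝ) ≤ (2 ^ α * Real.pi) ^ 2 - 9 by nlinarith [hb]), sq_nonneg (1 - α)]
  calc (4 * (1 - α) / (2 ^ α * Real.pi)) ^ 2 * τ ^ 2 / (1 - 2 * α)
      = (4 * (1 - α) / (2 ^ α * Real.pi)) ^ 2 * (τ ^ 2 * (1 - 2 * α)⁻¹) := by ring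
    _ ≤ 2 * (1 - α) ^ 2 * (τ ^ 2 * (1 - 2 * α)⁻¹) :=
        mul_le_mul_of_nonneg_right key (by positivity)
    _ = L' := by rw [hL']; simp only [one_div, inv_inv]; ring
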